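/- With optimized parameters α_f = (2μη k̲ k̄)²/D, α_p = 1/D, D = 1 + (2μη k̲ k̄)² + μη(k̲ + k̄)², the maximum of |ρ(k)| over [k̲, k̄] equals ρ(√(k̲ k̄)) = 1 - (√α_f + √α_p)², i.e., |ρ(k)| ≤ ρ(√(k̲ k̄)) for all k ∈ [k̲, k̄]. -/

import Mathlib

theorem abs_rho_max (μ η kl ku : ℝ) (hμ : 0 < μ) (hη : 0 < η)
    (hkl : 0 < kl) (hlt : kl < ku) :
    let D := 1 + (2*μ*η*kl*ku)^2 + μ*η*(kl + ku)^2
    let αf := (2*μ*η*kl*ku)^2 / D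
    let αp := 1 / D
    let ρ := fun k : ℝ => 1 - αp * (1 + 2*μ*η*k^2) - αf * (1 + (2*μ*η*k^2)⁻¹)
    (∀ k ∈ Set.Icc kl ku, |ρ k| ≤ ρ (Real.sqrt (kl * ku))) ∧
    ρ (Real.sqrt (kl * ku)) = 1 - (Real.sqrt αf + Real.sqrt αp)^2 := by
  intro D αf αp ρ
  have hku : 0 < ku := hkl.trans hlt
  have ha : 0 < 2*μ*η*kl*ku := by positivity
  have hd : 0 < D := by unfold D; positivity
  have hsq : Real.sqrt (kl*ku) ^ 2 = kl * ku := Real.sq_sqrt (by positivity)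
  have hmm : (0:ℝ) < 2*μ*η*(kl*ku) := by positivity
  have hrho_mid : ρ (Real.sqrt (kl*ku)) = 1 - (1 + 2*μ*η*kl*ku)^2 / D := by
    unfold ρ αp αf
    simp only [hsq]
    field_simp
    ring
  constructor
  · rintro k ⟨hk1, hk2⟩
    have hk0 : 0 < k := hkl.trans_le hk1
    have hu : 0 < 2*μ*η*k^2 := by positivity
    have hpu : 2*μ*η*kl^2 ≤ 2*μ*η*k^2 := by
      have h2 : kl^2 ≤ k^2 := by nlinarith
      exact mul_le_mul_of_nonneg_left h2 (by positivity)
    have huq : 2*μ*η*k^2 ≤ 2*μ*η*ku^2 := by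
      have h2 : k^2 ≤ ku^2 := by nlinarith
      exact mul_le_mul_of_nonneg_left h2 (by positivity)
    rw [hrho_mid, abs_le]
    unfold ρ αp αf
    set a := 2*μ*η*kl*ku with ha_def
    set u := 2*μ*η*k^2 with hu_def
    set p := 2*μ*η*kl^2 with hp_def
    set q := 2*μ*η*ku^2 with hq_def
    have hp : 0 < p := by rw [hp_def]; positivity
    have hq : 0 < q := by rw [hq_def]; positivity
    have ha2 : a^2 = p * q := by rw [ha_def, hp_def, hq_def]; ring
    have hD_eq : D = 1 + a^2 + p/2 + q/2 + a := by
      unfold D; rw [ha_def, hp_def, hq_def]; ring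
    have hE : (0:ℝ) < 1 + p*q + p/2 + q/2 + a := by
      have := mul_pos hp hq; linarith
    have hkey : 0 ≤ (u - p) * (q - u) :=
      mul_nonneg (by linarith) (by linarith)
    constructor
    · rw [← sub_nonneg]
      have e1 : 1 - 1/D*(1+u) - a^2/D*(1+u⁻¹) - -(1 - (1+a)^2/D)
          = (u - p) * (q - u) / (D * u) := by
        rw [hD_eq, ha2]
        field_simp
        ring
      rw [e1]
      exact div_nonneg hkey (mul_pos hd hu).le
    · rw [← sub_nonneg]
      have e2 : 1 - (1+a)^2/D - (1 - 1/D*(1+u) - a^2/D*(1+u⁻¹))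
          = (u - a)^2 / (D * u) := by
        field_simp
        ring
      rw [e2]
      exact div_nonneg (sq_nonneg _) (mul_pos hd hu).le
  · rw [hrho_mid]
    unfold αf αp
    have h1 : Real.sqrt ((2*μ*η*kl*ku)^2 / D) = (2*μ*η*kl*ku) / Real.sqrt D := by
      rw [Real.sqrt_div (sq_nonneg _), Real.sqrt_sq ha.le]
    have h2 : Real.sqrt (1 / D) = 1 / Real.sqrt D := by
      rw [Real.sqrt_div (by norm_num : (0:ℝ) ≤ 1), Real.sqrt_one]
    have hsd : Real.sqrt D ^ 2 = D := Real.sq_sqrt hd.le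
    rw [h1, h2, ← add_div, div_pow, hsd]
    ring
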